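/- Let A be an n×n real matrix (n ≥ 1) and m ≥ 1. For 0 ≤ i < n, let α_i = max over subsets S of the index set with |S| = n − i of the tropical permanent of A|_S, and let β_i be defined in the same way for the tropical power A^{⊙m}. Then β_i ≥ m · α_i for every i with 0 ≤ i < n. -/

import Mathlib

/-- The tropical (max-plus) product of two `n × n` real matrices:
`(A ⊙ B) i j = max_k (A i k + B k j)`. -/
noncomputable def tropMul {n : ℕ} [NeZero n] (A B : Fin n → Fin n → ℝ) :
    Fin n → Fin n → ℝ :=
  fun i j => Finset.univ.sup' Finset.univ_nonempty fun k => A i k + B k j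

/-- The `m`-th tropical power `A^{⊙m}` of an `n × n` real matrix (meaningful for
`m ≥ 1`; the value at `m = 0` is a junk value). -/
noncomputable def tropPow {n : ℕ} [NeZero n] (A : Fin n → Fin n → ℝ) :
    ℕ → Fin n → Fin n → ℝ
  | 0 => fun _ _ => 0
  | 1 => A
  | m + 2 => tropMul A (tropPow A (m + 1))

/-- The tropical permanent of the principal submatrix of `M` on the index set
`S`: the maximum over permutations `σ` of `S` of `∑_{i ∈ S} M i (σ i)`. -/
noncomputable def tropPermOn {n : ℕ} (M : Fin n → Fin n → ℝ) (S : Finset (Fin n)) : ℝ :=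
  Finset.univ.sup' ⟨Equiv.refl {x // x ∈ S}, Finset.mem_univ _⟩
    fun σ : Equiv.Perm {x // x ∈ S} => ∑ i : {x // x ∈ S}, M (i : Fin n) ((σ i : Fin n))

/-- The coefficient of `x^i` in the tropical characteristic polynomial of `M`:
the maximum of the tropical permanents of all principal `(n−i) × (n−i)` minors. -/
noncomputable def tropCharCoeff {n : ℕ} (M : Fin n → Fin n → ℝ) (i : ℕ) : ℝ :=
  ((Finset.univ : Finset (Fin n)).powersetCard (n - i)).sup'
    (Finset.powersetCard_nonempty.mpr (by simp))
    fun S => tropPermOn M S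

lemma tropPow_path_le {n : ℕ} [NeZero n] (A : Fin n → Fin n → ℝ) :
    ∀ m : ℕ, 1 ≤ m → ∀ f : ℕ → Fin n,
      ∑ k ∈ Finset.range m, A (f k) (f (k + 1)) ≤ tropPow A m (f 0) (f m) := by
  intro m
  induction m with
  | zero => intro h; omega
  | succ m ih =>
    intro _ f
    rcases Nat.eq_zero_or_pos m with rfl | hm
    · simp [tropPow]
    · have h1 : tropPow A (m + 1) = tropMul A (tropPow A m) := by
        obtain ⟨m', rfl⟩ : ∃ m', m = m' + 1 := ⟨m - 1, by omega⟩
        rfl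
      rw [h1]
      have h2 : ∑ k ∈ Finset.range (m + 1), A (f k) (f (k + 1))
          = A (f 0) (f 1) + ∑ k ∈ Finset.range m, A (f (k + 1)) (f (k + 2)) := by
        rw [Finset.sum_range_succ']; ring
      rw [h2]
      have h3 := ih hm (fun k => f (k + 1))
      calc A (f 0) (f 1) + ∑ k ∈ Finset.range m, A (f (k + 1)) (f (k + 2))
          ≤ A (f 0) (f 1) + tropPow A m (f 1) (f (m + 1)) := by
            exact add_le_add le_rfl h3
        _ ≤ tropMul A (tropPow A m) (f 0) (f (m + 1)) :=
            Finset.le_sup' (fun k => A (f 0) k + tropPow A m k (f (m + 1)))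
              (Finset.mem_univ (f 1))

theorem tropCharCoeff_tropPow_ge {n : ℕ} [NeZero n] (A : Fin n → Fin n → ℝ)
    (m : ℕ) (hm : 1 ≤ m) (i : ℕ) (hi : i < n) :
    tropCharCoeff (tropPow A m) i ≥ (m : ℝ) * tropCharCoeff A i := by
  unfold tropCharCoeff
  rw [ge_iff_le]
  obtain ⟨S, hS, hSval⟩ := Finset.exists_mem_eq_sup'
    (Finset.powersetCard_nonempty.mpr (by simp : (n - i) ≤ (Finset.univ : Finset (Fin n)).card))
    (fun S => tropPermOn A S)
  rw [hSval]
  unfold tropPermOn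
  obtain ⟨σ, -, hσval⟩ := Finset.exists_mem_eq_sup'
    (⟨Equiv.refl {x // x ∈ S}, Finset.mem_univ _⟩ :
      (Finset.univ : Finset (Equiv.Perm {x // x ∈ S})).Nonempty)
    (fun σ : Equiv.Perm {x // x ∈ S} => ∑ j : {x // x ∈ S}, A (j : Fin n) ((σ j : Fin n)))
  rw [hσval]
  -- key inequality
  have key : (m : ℝ) * ∑ j : {x // x ∈ S}, A (j : Fin n) ((σ j : Fin n))
      ≤ ∑ j : {x // x ∈ S}, tropPow A m (j : Fin n) (((σ ^ m) j : Fin n)) := by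
    have step : ∀ j : {x // x ∈ S},
        ∑ k ∈ Finset.range m, A (((σ ^ k) j : Fin n)) (((σ ^ (k + 1)) j : Fin n))
          ≤ tropPow A m (j : Fin n) (((σ ^ m) j : Fin n)) := by
      intro j
      have := tropPow_path_le A m hm (fun k => ((σ ^ k) j : Fin n))
      simpa using this
    calc (m : ℝ) * ∑ j : {x // x ∈ S}, A (j : Fin n) ((σ j : Fin n))
        = ∑ k ∈ Finset.range m, ∑ j : {x // x ∈ S}, A (j : Fin n) ((σ j : Fin n)) := by
          rw [Finset.sum_const, Finset.card_range, nsmul_eq_mul]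
      _ = ∑ k ∈ Finset.range m, ∑ j : {x // x ∈ S},
            A (((σ ^ k) j : Fin n)) (((σ ^ (k + 1)) j : Fin n)) := by
          refine Finset.sum_congr rfl fun k _ => ?_
          rw [← Equiv.sum_comp (σ ^ k) (fun j => A (j : Fin n) ((σ j : Fin n)))]
          refine Finset.sum_congr rfl fun j _ => ?_
          congr 1
          rw [pow_succ']
          rfl
      _ = ∑ j : {x // x ∈ S}, ∑ k ∈ Finset.range m,
            A (((σ ^ k) j : Fin n)) (((σ ^ (k + 1)) j : Fin n)) := Finset.sum_comm
      _ ≤ ∑ j : {x // x ∈ S}, tropPow A m (j : Fin n) (((σ ^ m) j : Fin n)) :=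
          Finset.sum_le_sum fun j _ => step j
  refine key.trans ?_
  calc ∑ j : {x // x ∈ S}, tropPow A m (j : Fin n) (((σ ^ m) j : Fin n))
      ≤ tropPermOn (tropPow A m) S :=
        Finset.le_sup' (f := fun τ : Equiv.Perm {x // x ∈ S} =>
          ∑ j : {x // x ∈ S}, tropPow A m (j : Fin n) ((τ j : Fin n)))
          (Finset.mem_univ (σ ^ m))
    _ ≤ _ := Finset.le_sup' (fun T => tropPermOn (tropPow A m) T) hS
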